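/- For any two real symmetric p×p matrices A and B, the Kolmogorov distance between their empirical spectral distributions is at most rank(A−B)/p. -/
import Mathlib


open MeasureTheory

/-- Empirical spectral distribution of a Hermitian matrix. -/
noncomputable def esd {p : ℕ} (A : Matrix (Fin p) (Fin p) ℝ) (hA : A.IsHermitian) :
    Measure ℝ :=
  ((p : ENNReal))⁻¹ • ∑ i : Fin p, Measure.dirac (hA.eigenvalues i)

/-- Kolmogorov distance between two measures on ℝ. -/
noncomputable def kolmogorovDist (μ ν : Measure ℝ) : ℝ :=
  ⨆ x : ℝ, |(μ (Set.Iic x)).toReal - (ν (Set.Iic x)).toReal|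

section Aux

open Module
open scoped InnerProductSpace

variable {p : ℕ}

lemma toEuclideanLin_eigen (A : Matrix (Fin p) (Fin p) ℝ) (hA : A.IsHermitian) (i : Fin p) :
    Matrix.toEuclideanLin A (hA.eigenvectorBasis i) =
      hA.eigenvalues i • hA.eigenvectorBasis i := by
  apply (WithLp.equiv 2 (Fin p → ℝ)).injective
  simpa [Matrix.toEuclideanLin_apply] using hA.mulVec_eigenvectorBasis i

lemma inner_toEuclideanLin (A : Matrix (Fin p) (Fin p) ℝ) (hA : A.IsHermitian)
    (v : EuclideanSpace ℝ (Fin p)) :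
    ⟪Matrix.toEuclideanLin A v, v⟫_ℝ =
      ∑ i, hA.eigenvalues i * ⟪hA.eigenvectorBasis i, v⟫_ℝ ^ 2 := by
  have hsym := (Matrix.isHermitian_iff_isSymmetric.mp hA)
  rw [← (hA.eigenvectorBasis).sum_inner_mul_inner (Matrix.toEuclideanLin A v) v]
  refine Finset.sum_congr rfl fun i _ => ?_
  have h1 : ⟪Matrix.toEuclideanLin A v, hA.eigenvectorBasis i⟫_ℝ
      = hA.eigenvalues i * ⟪hA.eigenvectorBasis i, v⟫_ℝ := by
    rw [hsym v (hA.eigenvectorBasis i), toEuclideanLin_eigen A hA i, inner_smul_right,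
      real_inner_comm]
  rw [h1]; ring

lemma norm_sq_eq_sum_inner (u : OrthonormalBasis (Fin p) ℝ (EuclideanSpace ℝ (Fin p)))
    (v : EuclideanSpace ℝ (Fin p)) :
    ‖v‖ ^ 2 = ∑ i, ⟪u i, v⟫_ℝ ^ 2 := by
  have := u.sum_inner_mul_inner v v
  rw [← real_inner_self_eq_norm_sq v, ← this]
  refine Finset.sum_congr rfl fun i _ => ?_
  rw [real_inner_comm v (u i)]; ring

lemma coeff_zero {P : Fin p → Prop} (u : OrthonormalBasis (Fin p) ℝ (EuclideanSpace ℝ (Fin p)))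
    {v : EuclideanSpace ℝ (Fin p)}
    (hv : v ∈ Submodule.span ℝ (Set.range fun i : {i // P i} => u i))
    {j : Fin p} (hj : ¬ P j) : ⟪u j, v⟫_ℝ = 0 := by
  induction hv using Submodule.span_induction with
  | mem w hw =>
    obtain ⟨i, rfl⟩ := hw
    exact u.orthonormal.2 (fun h => hj (h ▸ i.2))
  | zero => simp
  | add a b _ _ ha hb => rw [inner_add_right, ha, hb, add_zero]
  | smul c a _ ha => rw [inner_smul_right, ha, mul_zero]

lemma finrank_span_ob {P : Fin p → Prop} [DecidablePred P]
    (u : OrthonormalBasis (Fin p) ℝ (EuclideanSpace ℝ (Fin p))) :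
    finrank ℝ (Submodule.span ℝ (Set.range fun i : {i // P i} => u i)) =
      (Finset.univ.filter P).card := by
  have h := finrank_span_eq_card ((u.orthonormal.linearIndependent).comp
    (Subtype.val : {i // P i} → Fin p) Subtype.val_injective)
  simpa [Function.comp_def, Fintype.card_subtype] using h

lemma rank_add_ker (M : Matrix (Fin p) (Fin p) ℝ) :
    M.rank + finrank ℝ (LinearMap.ker (Matrix.toEuclideanLin M)) = p := by
  have h : Matrix.toEuclideanLin M =
      (((WithLp.linearEquiv 2 ℝ (Fin p → ℝ)).symm : (Fin p → ℝ) →ₗ[ℝ] _).comp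
        (M.mulVecLin)).comp (WithLp.linearEquiv 2 ℝ (Fin p → ℝ) : _ →ₗ[ℝ] (Fin p → ℝ)) := rfl
  have h2 : finrank ℝ (LinearMap.range (Matrix.toEuclideanLin M)) = M.rank := by
    rw [h, LinearMap.range_comp, LinearEquiv.range, Submodule.map_top, LinearMap.range_comp,
      LinearEquiv.finrank_map_eq, Matrix.rank]
  have := LinearMap.finrank_range_add_finrank_ker (Matrix.toEuclideanLin M)
  rw [h2] at this
  simpa using this

noncomputable def countLe {p : ℕ} (A : Matrix (Fin p) (Fin p) ℝ) (hA : A.IsHermitian)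
    (x : ℝ) : ℕ :=
  (Finset.univ.filter (fun i => hA.eigenvalues i ≤ x)).card

lemma countLe_le (A B : Matrix (Fin p) (Fin p) ℝ) (hA : A.IsHermitian) (hB : B.IsHermitian)
    (x : ℝ) : countLe A hA x ≤ countLe B hB x + (A - B).rank := by
  classical
  set PA := fun i => hA.eigenvalues i ≤ x with hPA
  set PB := fun i => x < hB.eigenvalues i with hPB
  set V := Submodule.span ℝ (Set.range fun i : {i // PA i} => hA.eigenvectorBasis i) with hVdef
  set W := Submodule.span ℝ (Set.range fun i : {i // PB i} => hB.eigenvectorBasis i) with hWdef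
  set K := LinearMap.ker (Matrix.toEuclideanLin (A - B)) with hKdef
  have hdis : Disjoint V (W ⊓ K) := by
    rw [Submodule.disjoint_def]
    rintro v hV ⟨hW, hK⟩
    by_contra hne
    have hAB : Matrix.toEuclideanLin A v = Matrix.toEuclideanLin B v := by
      have h0 : Matrix.toEuclideanLin (A - B) v = 0 := hK
      rw [map_sub] at h0
      exact sub_eq_zero.mp (by simpa using h0)
    have h1 : ⟪Matrix.toEuclideanLin A v, v⟫_ℝ ≤ x * ‖v‖ ^ 2 := by
      rw [inner_toEuclideanLin A hA, norm_sq_eq_sum_inner hA.eigenvectorBasis, Finset.mul_sum]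
      refine Finset.sum_le_sum fun i _ => ?_
      by_cases h : PA i
      · exact mul_le_mul_of_nonneg_right h (sq_nonneg _)
      · rw [coeff_zero _ hV h]; simp
    have h2 : x * ‖v‖ ^ 2 < ⟪Matrix.toEuclideanLin B v, v⟫_ℝ := by
      rw [inner_toEuclideanLin B hB, norm_sq_eq_sum_inner hB.eigenvectorBasis, Finset.mul_sum]
      have hex : ∃ i, ⟪hB.eigenvectorBasis i, v⟫_ℝ ≠ 0 := by
        by_contra hall
        push_neg at hall
        refine hne ?_
        have hnv : ‖v‖ ^ 2 = 0 := by
          rw [norm_sq_eq_sum_inner hB.eigenvectorBasis]; simp [hall]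
        have : ‖v‖ = 0 := by nlinarith [norm_nonneg v]
        simpa using norm_eq_zero.mp this
      obtain ⟨i0, hi0⟩ := hex
      have hPB0 : PB i0 := by
        by_contra h; exact hi0 (coeff_zero _ hW h)
      refine Finset.sum_lt_sum (fun i _ => ?_) ⟨i0, Finset.mem_univ _, ?_⟩
      · by_cases h : PB i
        · exact mul_le_mul_of_nonneg_right (le_of_lt h) (sq_nonneg _)
        · rw [coeff_zero _ hW h]; simp
      · exact mul_lt_mul_of_pos_right hPB0
          (lt_of_le_of_ne (sq_nonneg _) (Ne.symm (pow_ne_zero 2 hi0)))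
    rw [hAB] at h1; linarith
  have hVr : finrank ℝ V = countLe A hA x := finrank_span_ob hA.eigenvectorBasis
  have hWr : finrank ℝ W + countLe B hB x = p := by
    rw [hWdef, finrank_span_ob hB.eigenvectorBasis, countLe]
    have hfe : Finset.univ.filter PB = Finset.univ.filter (fun i => ¬ (hB.eigenvalues i ≤ x)) :=
      Finset.filter_congr (fun i _ => by simp [hPB, not_le])
    rw [hfe]
    have := Finset.card_filter_add_card_filter_not
      (s := (Finset.univ : Finset (Fin p))) (p := fun i => hB.eigenvalues i ≤ x)
    simpa [add_comm] using this
  have hKr : (A - B).rank + finrank ℝ K = p := rank_add_ker _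
  have hd1 : finrank ℝ V + finrank ℝ ↥(W ⊓ K) ≤ p := by
    have := Submodule.finrank_add_finrank_le_of_disjoint hdis
    simpa [finrank_euclideanSpace_fin] using this
  have hd2 : finrank ℝ W + finrank ℝ K ≤ p + finrank ℝ ↥(W ⊓ K) := by
    have heq := Submodule.finrank_sup_add_finrank_inf_eq W K
    have hle : finrank ℝ ↥(W ⊔ K) ≤ p :=
      le_trans (Submodule.finrank_le _) (le_of_eq finrank_euclideanSpace_fin)
    omega
  omega

lemma esd_Iic (A : Matrix (Fin p) (Fin p) ℝ) (hA : A.IsHermitian) (x : ℝ) :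
    ((esd A hA) (Set.Iic x)).toReal = (countLe A hA x : ℝ) / p := by
  classical
  rw [esd, Measure.smul_apply, Measure.finset_sum_apply]
  simp only [Measure.dirac_apply' _ measurableSet_Iic, Set.indicator_apply, Set.mem_Iic,
    Pi.one_apply]
  rw [Finset.sum_boole, smul_eq_mul, ENNReal.toReal_mul, ENNReal.toReal_inv,
    ENNReal.toReal_natCast, ENNReal.toReal_natCast, countLe, inv_mul_eq_div]

lemma rank_sub_comm (A B : Matrix (Fin p) (Fin p) ℝ) :
    (B - A).rank = (A - B).rank := by
  rw [show B - A = -(A - B) by abel, Matrix.rank, Matrix.rank]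
  have h : (-(A - B)).mulVecLin = -((A - B).mulVecLin) := by
    ext v
    simp [Matrix.neg_mulVec]
  rw [h, LinearMap.range_neg]

end Aux

/-- Theorem A.43 of Bai–Silverstein: the Kolmogorov distance between the empirical
spectral distributions of two symmetric matrices is at most rank(A−B)/p. -/
theorem kolmogorov_esd_le_rank {p : ℕ} (hp : 0 < p)
    (A B : Matrix (Fin p) (Fin p) ℝ) (hA : A.IsHermitian) (hB : B.IsHermitian) :
    kolmogorovDist (esd A hA) (esd B hB) ≤ ((A - B).rank : ℝ) / p := by
  have hr : ∀ x : ℝ, |((esd A hA) (Set.Iic x)).toReal - ((esd B hB) (Set.Iic x)).toReal|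
      ≤ ((A - B).rank : ℝ) / p := by
    intro x
    rw [esd_Iic, esd_Iic, div_sub_div_same, abs_div, Nat.abs_cast]
    have h1 := countLe_le A B hA hB x
    have h2 := countLe_le B A hB hA x
    rw [rank_sub_comm A B] at h2
    have key : |(countLe A hA x : ℝ) - (countLe B hB x : ℝ)| ≤ ((A - B).rank : ℝ) := by
      rw [abs_sub_le_iff]
      constructor
      · have : (countLe A hA x : ℝ) ≤ (countLe B hB x : ℝ) + ((A - B).rank : ℝ) := by
          exact_mod_cast h1
        linarith
      · have : (countLe B hB x : ℝ) ≤ (countLe A hA x : ℝ) + ((A - B).rank : ℝ) := by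
          exact_mod_cast h2
        linarith
    gcongr
  rw [kolmogorovDist]
  exact ciSup_le hr
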